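/- arXiv:1806.02365 — 4 statements merged into one kernel-verified Lean document; each statement's English description precedes it below -/
import Mathlib

section
/- Let R₀ > 0 and f:(0,∞)→ℂ measurable. Then ‖∫_r^∞ f(r') dr'‖_{L²_e((R₀,∞))} ≤ ‖f‖_{L¹_e((R₀,∞))}, where ‖g‖_{L²_e(I)} = (∫_I |g|² r dr)^{1/2} and ‖g‖_{L¹_e(I)} = ∫_I |g| r dr. -/
open MeasureTheory Set

/-- `‖∫_r^∞ f(r') dr'‖_{L²_e((R₀,∞))} ≤ ‖f‖_{L¹_e((R₀,∞))}` where `L^p_e` is `L^p(r dr)`. -/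
theorem stmt_2 (R₀ : ℝ) (hR₀ : 0 < R₀) (f : ℝ → ℂ)
    (hf : IntegrableOn (fun r => ‖f r‖ * r) (Ioi R₀)) :
    Real.sqrt (∫ r in Ioi R₀, ‖∫ s in Ioi r, f s‖ ^ 2 * r) ≤
      ∫ r in Ioi R₀, ‖f r‖ * r := by
  set M : ℝ := ∫ r in Ioi R₀, ‖f r‖ * r with hMdef
  have hM0 : 0 ≤ M :=
    setIntegral_nonneg measurableSet_Ioi fun s hs =>
      mul_nonneg (norm_nonneg _) (hR₀.trans hs).le
  -- a.e. measurability of `s ↦ ‖f s‖` on `Ioi R₀`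
  have hφm : AEMeasurable (fun s => ‖f s‖) (volume.restrict (Ioi R₀)) := by
    have h1 : AEMeasurable (fun s => ‖f s‖ * s) (volume.restrict (Ioi R₀)) :=
      hf.aestronglyMeasurable.aemeasurable
    have h2 : AEMeasurable (fun s => ‖f s‖ * s * s⁻¹) (volume.restrict (Ioi R₀)) :=
      h1.mul (measurable_inv.aemeasurable)
    refine h2.congr ?_
    filter_upwards [ae_restrict_mem measurableSet_Ioi] with s hs
    field_simp [ne_of_gt (hR₀.trans hs)]
  -- integrability of `‖f ·‖` on `Ioi r` for `R₀ ≤ r`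
  have hφint : ∀ r : ℝ, R₀ ≤ r → IntegrableOn (fun s => ‖f s‖) (Ioi r) := by
    intro r hr
    have hsub : Ioi r ⊆ Ioi R₀ := Ioi_subset_Ioi hr
    have hr0 : 0 < r := hR₀.trans_le hr
    refine Integrable.mono ((hf.mono_set hsub).mul_const r⁻¹)
      ((hφm.mono_measure (Measure.restrict_mono hsub le_rfl)).aestronglyMeasurable) ?_
    filter_upwards [ae_restrict_mem measurableSet_Ioi] with s hs
    have hs0 : 0 < s := hr0.trans hs
    have hnn : (0:ℝ) ≤ ‖f s‖ * s * r⁻¹ :=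
      mul_nonneg (mul_nonneg (norm_nonneg _) hs0.le) (inv_nonneg.2 hr0.le)
    rw [Real.norm_eq_abs, Real.norm_eq_abs, abs_of_nonneg (norm_nonneg (f s)),
      abs_of_nonneg hnn]
    calc ‖f s‖ = ‖f s‖ * r * r⁻¹ := by field_simp
      _ ≤ ‖f s‖ * s * r⁻¹ :=
        mul_le_mul_of_nonneg_right
          (mul_le_mul_of_nonneg_left hs.le (norm_nonneg _)) (inv_nonneg.2 hr0.le)
  -- the auxiliary antitone function
  set g : ℝ → ℝ := fun r => ∫ s in Ioi (max r R₀), ‖f s‖ with hgdef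
  have hg0 : ∀ r, 0 ≤ g r := fun r =>
    setIntegral_nonneg measurableSet_Ioi fun s _ => norm_nonneg _
  have hganti : Antitone g := by
    intro a b hab
    exact setIntegral_mono_set (hφint _ (le_max_right a R₀))
      (Filter.Eventually.of_forall fun s => norm_nonneg _)
      (HasSubset.Subset.eventuallyLE (Ioi_subset_Ioi (max_le_max hab le_rfl)))
  have hgmeas : Measurable g := hganti.measurable
  -- pointwise: for r ∈ Ioi R₀, `g r * r ≤ M`
  have hgM : ∀ r ∈ Ioi R₀, g r * r ≤ M := by
    intro r hr
    have hr' : R₀ < r := hr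
    have hr0 : 0 < r := hR₀.trans hr'
    have hmax : max r R₀ = r := max_eq_left hr'.le
    rw [hgdef]
    simp only [hmax]
    rw [← integral_mul_const]
    calc ∫ s in Ioi r, ‖f s‖ * r
        ≤ ∫ s in Ioi r, ‖f s‖ * s := by
          refine setIntegral_mono_on ((hφint r hr'.le).mul_const r)
            (hf.mono_set (Ioi_subset_Ioi hr'.le)) measurableSet_Ioi ?_
          intro s hs
          exact mul_le_mul_of_nonneg_left (le_of_lt hs) (norm_nonneg _)
      _ ≤ M := setIntegral_mono_set hf
          (by filter_upwards [ae_restrict_mem measurableSet_Ioi] with s hs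
              exact mul_nonneg (norm_nonneg _) (hR₀.trans hs).le)
          (HasSubset.Subset.eventuallyLE (Ioi_subset_Ioi hr'.le))
  -- Tonelli: `∫⁻ ofReal (g r)` over `Ioi R₀` is at most `ofReal M`
  have hψm : AEMeasurable (fun s => ENNReal.ofReal ‖f s‖) (volume.restrict (Ioi R₀)) :=
    ENNReal.measurable_ofReal.comp_aemeasurable hφm
  have key : ∫⁻ r in Ioi R₀, ENNReal.ofReal (g r) ≤ ENNReal.ofReal M := by
    have step1 : ∫⁻ r in Ioi R₀, ENNReal.ofReal (g r)
        = ∫⁻ r in Ioi R₀, ∫⁻ s in Ioi R₀,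
            (Ioi r).indicator (fun s => ENNReal.ofReal ‖f s‖) s := by
      refine setLIntegral_congr_fun measurableSet_Ioi
        (fun r (hr : R₀ < r) => ?_)
      have hmax : max r R₀ = r := max_eq_left (le_of_lt hr)
      rw [hgdef]
      simp only [hmax]
      rw [ofReal_integral_eq_lintegral_ofReal (hφint r (le_of_lt hr))
        (Filter.Eventually.of_forall fun s => norm_nonneg _)]
      rw [lintegral_indicator measurableSet_Ioi, Measure.restrict_restrict measurableSet_Ioi,
        inter_eq_self_of_subset_left (Ioi_subset_Ioi (le_of_lt hr))]
    rw [step1]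
    have huncurry : AEMeasurable
        (Function.uncurry fun r s => (Ioi r).indicator (fun s => ENNReal.ofReal ‖f s‖) s)
        ((volume.restrict (Ioi R₀)).prod (volume.restrict (Ioi R₀))) := by
      have h1 : AEMeasurable (fun p : ℝ × ℝ => ENNReal.ofReal ‖f p.2‖)
          ((volume.restrict (Ioi R₀)).prod (volume.restrict (Ioi R₀))) :=
        hψm.comp_quasiMeasurePreserving MeasureTheory.Measure.quasiMeasurePreserving_snd
      have hset : MeasurableSet {p : ℝ × ℝ | p.1 < p.2} :=
        measurableSet_lt measurable_fst measurable_snd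
      refine (h1.indicator hset).congr (Filter.Eventually.of_forall fun p => ?_)
      by_cases h : p.1 < p.2 <;>
        simp [Function.uncurry, Set.indicator, h, mem_Ioi]
    rw [lintegral_lintegral_swap huncurry]
    have step2 : ∀ s ∈ Ioi R₀,
        (∫⁻ r in Ioi R₀, (Ioi r).indicator (fun s => ENNReal.ofReal ‖f s‖) s)
          ≤ ENNReal.ofReal (‖f s‖ * s) := by
      intro s hs
      have hind : ∀ r : ℝ, (Ioi r).indicator (fun s => ENNReal.ofReal ‖f s‖) s
          = (Iio s).indicator (fun _ => ENNReal.ofReal ‖f s‖) r := by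
        intro r
        by_cases h : r < s <;> simp [Set.indicator, h, mem_Ioi, mem_Iio]
      calc ∫⁻ r in Ioi R₀, (Ioi r).indicator (fun s => ENNReal.ofReal ‖f s‖) s
          = ∫⁻ r in Ioi R₀, (Iio s).indicator (fun _ => ENNReal.ofReal ‖f s‖) r := by
            simp only [hind]
        _ = ENNReal.ofReal ‖f s‖ * volume (Iio s ∩ Ioi R₀) := by
            rw [lintegral_indicator measurableSet_Iio,
              Measure.restrict_restrict measurableSet_Iio, setLIntegral_const]
        _ ≤ ENNReal.ofReal (‖f s‖ * s) := by
            have hIoo : Iio s ∩ Ioi R₀ = Ioo R₀ s := by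
              ext x; simp [mem_Ioo, and_comm]
            rw [hIoo, Real.volume_Ioo, ← ENNReal.ofReal_mul (norm_nonneg _)]
            exact ENNReal.ofReal_le_ofReal (by nlinarith [norm_nonneg (f s), hR₀])
    calc ∫⁻ s in Ioi R₀, ∫⁻ r in Ioi R₀, (Ioi r).indicator (fun s => ENNReal.ofReal ‖f s‖) s
        ≤ ∫⁻ s in Ioi R₀, ENNReal.ofReal (‖f s‖ * s) := by
          refine lintegral_mono_ae ?_
          filter_upwards [ae_restrict_mem measurableSet_Ioi] with s hs
          exact step2 s hs
      _ = ENNReal.ofReal M := by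
          rw [← ofReal_integral_eq_lintegral_ofReal hf ?_]
          filter_upwards [ae_restrict_mem measurableSet_Ioi] with s hs
          exact mul_nonneg (norm_nonneg _) (hR₀.trans hs).le
  -- integrability of g on Ioi R₀
  have hgint : IntegrableOn g (Ioi R₀) := by
    refine ⟨hgmeas.aestronglyMeasurable, ?_⟩
    rw [hasFiniteIntegral_def]
    have : ∀ r : ℝ, ‖g r‖ₑ = ENNReal.ofReal (g r) := fun r =>
      Real.enorm_eq_ofReal (hg0 r)
    simp only [this]
    exact lt_of_le_of_lt key ENNReal.ofReal_lt_top
  have hgle : ∫ r in Ioi R₀, g r ≤ M := by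
    rw [integral_eq_lintegral_of_nonneg_ae (Filter.Eventually.of_forall hg0)
      hgmeas.aestronglyMeasurable]
    calc (∫⁻ r in Ioi R₀, ENNReal.ofReal (g r)).toReal
        ≤ (ENNReal.ofReal M).toReal := ENNReal.toReal_mono ENNReal.ofReal_ne_top key
      _ = M := ENNReal.toReal_ofReal hM0
  -- main inequality
  have hsq : ∫ r in Ioi R₀, ‖∫ s in Ioi r, f s‖ ^ 2 * r ≤ M * M := by
    have hnonneg : 0 ≤ᵐ[volume.restrict (Ioi R₀)]
        fun r => ‖∫ s in Ioi r, f s‖ ^ 2 * r := by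
      filter_upwards [ae_restrict_mem measurableSet_Ioi] with r hr
      exact mul_nonneg (pow_nonneg (norm_nonneg _) 2) (hR₀.trans hr).le
    have hptwise : (fun r => ‖∫ s in Ioi r, f s‖ ^ 2 * r)
        ≤ᵐ[volume.restrict (Ioi R₀)] fun r => M * g r := by
      filter_upwards [ae_restrict_mem measurableSet_Ioi] with r hr
      have hr0 : 0 < r := hR₀.trans hr
      have h1 : ‖∫ s in Ioi r, f s‖ ≤ g r := by
        rw [hgdef]
        simp only [max_eq_left (le_of_lt (mem_Ioi.mp hr))]
        exact norm_integral_le_integral_norm f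
      have h2 := hgM r hr
      nlinarith [mul_le_mul h1 h1 (norm_nonneg _) (hg0 r), hg0 r, hr0.le,
        norm_nonneg (∫ s in Ioi r, f s)]
    calc ∫ r in Ioi R₀, ‖∫ s in Ioi r, f s‖ ^ 2 * r
        ≤ ∫ r in Ioi R₀, M * g r :=
          integral_mono_of_nonneg hnonneg (hgint.const_mul M) hptwise
      _ = M * ∫ r in Ioi R₀, g r := integral_const_mul M g
      _ ≤ M * M := mul_le_mul_of_nonneg_left hgle hM0
  have := Real.sqrt_le_sqrt hsq
  rwa [Real.sqrt_mul_self hM0] at this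
end

section
/- For any m-equivariant map u = e^{mθR} v(r) : ℝ² → S² with v(0) = −k and v(∞) = k (where k = (0,0,1)) and finite energy, the energy satisfies E(u) = π ∫₀^∞ |∂_r v − (m/r)(v × (Rv))|² r dr + 4πm. In particular E(u) ≥ 4πm, with equality iff ∂_r v = (m/r) v × (Rv) almost everywhere. -/
open MeasureTheory Set Real

/-- Energy identity for `m`-equivariant maps with `v(0⁺) = −k`, `v(∞) = k`:
`E(u) = π ∫₀^∞ |∂_r v − (m/r) v × Rv|² r dr + 4πm`, hence `E(u) ≥ 4πm` with equality iff
`∂_r v = (m/r) v × Rv` a.e. Here `Rv = (−v₂, v₁, 0)`. -/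
theorem stmt_6 (m : ℕ) (hm : 1 ≤ m) (v v' : ℝ → Fin 3 → ℝ)
    (hsphere : ∀ r ∈ Ioi (0:ℝ), ∑ i, (v r i) ^ 2 = 1)
    (hderiv : ∀ r ∈ Ioi (0:ℝ), ∀ i, HasDerivAt (fun s => v s i) (v' r i) r)
    (hv0 : Filter.Tendsto v (nhdsWithin 0 (Ioi 0)) (nhds ![0, 0, -1]))
    (hvinf : Filter.Tendsto v Filter.atTop (nhds ![0, 0, 1]))
    (hint1 : IntegrableOn (fun r =>
        ((∑ i, (v' r i) ^ 2) + (m : ℝ) ^ 2 * ((v r 0) ^ 2 + (v r 1) ^ 2) / r ^ 2) * r)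
      (Ioi 0))
    (hint2 : IntegrableOn (fun r =>
        (∑ i, (v' r i - ((m : ℝ) / r) *
          crossProduct (v r) ![-(v r 1), v r 0, 0] i) ^ 2) * r) (Ioi 0)) :
    (π * ∫ r in Ioi (0:ℝ),
        ((∑ i, (v' r i) ^ 2) + (m : ℝ) ^ 2 * ((v r 0) ^ 2 + (v r 1) ^ 2) / r ^ 2) * r
      = π * (∫ r in Ioi (0:ℝ),
          (∑ i, (v' r i - ((m : ℝ) / r) *
            crossProduct (v r) ![-(v r 1), v r 0, 0] i) ^ 2) * r) + 4 * π * m) ∧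
    (4 * π * m ≤ π * ∫ r in Ioi (0:ℝ),
        ((∑ i, (v' r i) ^ 2) + (m : ℝ) ^ 2 * ((v r 0) ^ 2 + (v r 1) ^ 2) / r ^ 2) * r) ∧
    ((π * ∫ r in Ioi (0:ℝ),
        ((∑ i, (v' r i) ^ 2) + (m : ℝ) ^ 2 * ((v r 0) ^ 2 + (v r 1) ^ 2) / r ^ 2) * r
      = 4 * π * m) ↔
      ∀ᵐ r ∂(volume.restrict (Ioi 0)), ∀ i,
        v' r i = ((m : ℝ) / r) * crossProduct (v r) ![-(v r 1), v r 0, 0] i) := by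
  have hmR : (0:ℝ) < m := by exact_mod_cast hm
  set A : ℝ → ℝ := fun r =>
    ((∑ i, (v' r i) ^ 2) + (m : ℝ) ^ 2 * ((v r 0) ^ 2 + (v r 1) ^ 2) / r ^ 2) * r with hAdef
  set B : ℝ → ℝ := fun r =>
    (∑ i, (v' r i - ((m : ℝ) / r) *
      crossProduct (v r) ![-(v r 1), v r 0, 0] i) ^ 2) * r with hBdef
  -- orthogonality: v ⊥ v' on Ioi 0
  have horth : ∀ r ∈ Ioi (0:ℝ), v r 0 * v' r 0 + v r 1 * v' r 1 + v r 2 * v' r 2 = 0 := by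
    intro r hr
    have h1 : HasDerivAt (fun s => ∑ i, (v s i) ^ 2)
        (∑ i : Fin 3, (2:ℕ) * (v r i) ^ 1 * v' r i) r :=
      HasDerivAt.fun_sum fun i _ => (hderiv r hr i).pow 2
    have heq : (fun s => ∑ i, (v s i) ^ 2) =ᶠ[nhds r] fun _ => (1:ℝ) :=
      Filter.eventuallyEq_of_mem (isOpen_Ioi.mem_nhds hr) fun s hs => hsphere s hs
    have h2 : HasDerivAt (fun _ : ℝ => (1:ℝ))
        (∑ i : Fin 3, (2:ℕ) * (v r i) ^ 1 * v' r i) r := h1.congr_of_eventuallyEq heq.symm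
    have h3 := h2.unique (hasDerivAt_const r (1:ℝ))
    simp only [Fin.sum_univ_three, pow_one, Nat.cast_ofNat] at h3
    linarith
  -- pointwise identity B = A - 2 m v'₂
  have hkey : ∀ r ∈ Ioi (0:ℝ), B r = A r - 2 * (m:ℝ) * v' r 2 := by
    intro r hr
    have hr0 : r ≠ 0 := ne_of_gt hr
    have hq := hsphere r hr
    have hs := horth r hr
    simp only [Fin.sum_univ_three] at hq
    simp only [hAdef, hBdef, Fin.sum_univ_three, cross_apply, Matrix.cons_val_zero,
      Matrix.cons_val_one, Matrix.head_cons, Matrix.cons_val_two, Matrix.tail_cons]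
    field_simp
    linear_combination ((m:ℝ)^2 * ((v r 0)^2 + (v r 1)^2) - 2 * r * (m:ℝ) * v' r 2) * hq
      + (2 * r * (m:ℝ) * v r 2) * hs
  -- integrability of v'₂ on Ioi 0
  have hABint : IntegrableOn (fun r => A r - B r) (Ioi 0) := hint1.sub hint2
  have hderint : IntegrableOn (fun r => v' r 2) (Ioi 0) := by
    have h1 : IntegrableOn (fun r => (2 * (m:ℝ))⁻¹ * (A r - B r)) (Ioi 0) :=
      hABint.const_mul _
    apply h1.congr_fun _ measurableSet_Ioi
    intro r hr
    have := hkey r hr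
    field_simp
    linarith
  -- FTC: ∫ v'₂ = 2
  set w : ℝ → ℝ := fun r => if 0 < r then v r 2 else -1 with hwdef
  have hwIoi : ∀ r ∈ Ioi (0:ℝ), w r = v r 2 := fun r hr => if_pos hr
  have hv02 : Filter.Tendsto (fun r => v r 2) (nhdsWithin 0 (Ioi 0)) (nhds (-1)) := by
    have := ((continuous_apply (2 : Fin 3)).tendsto _).comp hv0
    simpa [Function.comp_def] using this
  have hvinf2 : Filter.Tendsto (fun r => v r 2) Filter.atTop (nhds 1) := by
    have := ((continuous_apply (2 : Fin 3)).tendsto _).comp hvinf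
    simpa [Function.comp_def] using this
  have hwcont : ContinuousWithinAt w (Ici 0) 0 := by
    rw [ContinuousWithinAt]
    have h0 : w 0 = -1 := by simp [hwdef]
    rw [h0, ← Ioi_union_left, nhdsWithin_union]
    apply Filter.Tendsto.sup
    · exact hv02.congr' (Filter.eventuallyEq_of_mem self_mem_nhdsWithin
        fun r hr => (hwIoi r hr).symm)
    · rw [nhdsWithin_singleton, ← h0]
      exact tendsto_pure_nhds w 0
  have hwderiv : ∀ r ∈ Ioi (0:ℝ), HasDerivAt w (v' r 2) r := by
    intro r hr
    apply (hderiv r hr 2).congr_of_eventuallyEq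
    exact Filter.eventuallyEq_of_mem (isOpen_Ioi.mem_nhds hr) fun s hs => hwIoi s hs
  have hwinf : Filter.Tendsto w Filter.atTop (nhds 1) :=
    hvinf2.congr' (Filter.eventuallyEq_of_mem (Filter.Ioi_mem_atTop 0)
      fun r hr => (hwIoi r hr).symm)
  have hFTC : ∫ r in Ioi (0:ℝ), v' r 2 = 2 := by
    have := integral_Ioi_of_hasDerivAt_of_tendsto hwcont hwderiv hderint hwinf
    simp only [hwdef] at this
    rw [this]; norm_num
  -- main identity on integrals
  have hintid : ∫ r in Ioi (0:ℝ), A r = (∫ r in Ioi (0:ℝ), B r) + 4 * m := by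
    have h1 : ∫ r in Ioi (0:ℝ), B r
        = ∫ r in Ioi (0:ℝ), (A r - 2 * (m:ℝ) * v' r 2) :=
      setIntegral_congr_fun measurableSet_Ioi hkey
    rw [h1, integral_sub hint1 ((hderint.const_mul (2 * (m:ℝ))))]
    rw [integral_const_mul, hFTC]
    ring
  have hmain : π * ∫ r in Ioi (0:ℝ), A r = π * (∫ r in Ioi (0:ℝ), B r) + 4 * π * m := by
    rw [hintid]; ring
  have hBnonneg : ∀ r ∈ Ioi (0:ℝ), 0 ≤ B r := by
    intro r hr
    exact mul_nonneg (Finset.sum_nonneg fun i _ => sq_nonneg _) (le_of_lt hr)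
  have hBint_nonneg : 0 ≤ ∫ r in Ioi (0:ℝ), B r :=
    setIntegral_nonneg measurableSet_Ioi hBnonneg
  refine ⟨hmain, ?_, ?_⟩
  · nlinarith [pi_pos]
  · rw [hmain]
    have hiff1 : π * (∫ r in Ioi (0:ℝ), B r) + 4 * π * ↑m = 4 * π * ↑m
        ↔ ∫ r in Ioi (0:ℝ), B r = 0 := by
      constructor
      · intro h
        have : π * (∫ r in Ioi (0:ℝ), B r) = 0 := by linarith
        rcases mul_eq_zero.1 this with h' | h'
        · exact absurd h' (ne_of_gt pi_pos)
        · exact h'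
      · intro h; rw [h]; ring
    rw [hiff1]
    have hBnonneg_ae : 0 ≤ᵐ[volume.restrict (Ioi 0)] B :=
      (ae_restrict_iff' measurableSet_Ioi).2 (Filter.Eventually.of_forall hBnonneg)
    rw [MeasureTheory.integral_eq_zero_iff_of_nonneg_ae hBnonneg_ae hint2]
    constructor
    · intro h
      filter_upwards [h, ae_restrict_mem measurableSet_Ioi] with r hB0 hrIoi
      have hr0 : (0:ℝ) < r := hrIoi
      have hsum : (∑ i, (v' r i - ((m : ℝ) / r) *
          crossProduct (v r) ![-(v r 1), v r 0, 0] i) ^ 2) = 0 := by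
        have := mul_eq_zero.1 hB0
        rcases this with h' | h'
        · exact h'
        · exact absurd h' (ne_of_gt hr0)
      intro i
      have := (Finset.sum_eq_zero_iff_of_nonneg (fun i _ => sq_nonneg _)).1 hsum i
        (Finset.mem_univ i)
      have := pow_eq_zero_iff (n := 2) (by norm_num) |>.1 this
      linarith
    · intro h
      filter_upwards [h] with r hr
      show B r = 0
      simp only [hBdef]
      rw [Finset.sum_eq_zero (fun i _ => by rw [hr i]; ring), zero_mul]
end

section
/- Let g ∈ L^∞((0,∞)) with ∂_r g ∈ L²((0,∞), r dr), and let φ ∈ H¹_e. Then gφ ∈ H¹_e and ‖gφ‖_{H¹_e} ≤ C(‖g‖_{L^∞} + ‖∂_r g‖_{L²_e})‖φ‖_{H¹_e} for a universal constant C. -/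
open MeasureTheory Set

private lemma norm_sq_complex (a : ℂ) : ‖a‖^2 = a.re^2 + a.im^2 := by
  rw [Complex.sq_norm, Complex.normSq_apply]; ring

private lemma linf_bound (φ φ' : ℝ → ℂ)
    (hφd : ∀ r ∈ Ioi (0:ℝ), HasDerivAt φ (φ' r) r)
    (hφi : IntegrableOn (fun r =>
      (‖φ r‖ ^ 2 + ‖φ' r‖ ^ 2 + ‖φ r / (r : ℂ)‖ ^ 2) * r) (Ioi 0)) :
    ∀ a ∈ Ioi (0:ℝ), ‖φ a‖ ^ 2 ≤ ∫ r in Ioi (0:ℝ),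
      (‖φ r‖ ^ 2 + ‖φ' r‖ ^ 2 + ‖φ r / (r : ℂ)‖ ^ 2) * r := by
  set F : ℝ → ℝ := fun r => (‖φ r‖ ^ 2 + ‖φ' r‖ ^ 2 + ‖φ r / (r : ℂ)‖ ^ 2) * r with hF
  set I : ℝ := ∫ r in Ioi (0:ℝ), F r with hI
  have hF0 : ∀ r ∈ Ioi (0:ℝ), 0 ≤ F r := by
    intro r hr; have : (0:ℝ) < r := hr; positivity
  set h : ℝ → ℝ := fun s => (φ s).re ^ 2 + (φ s).im ^ 2 with hh
  set h' : ℝ → ℝ := fun s => 2 * ((φ s).re * (φ' s).re + (φ s).im * (φ' s).im) with hh'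
  have hnorm : ∀ s, ‖φ s‖ ^ 2 = h s := fun s => norm_sq_complex (φ s)
  have hderiv : ∀ s ∈ Ioi (0:ℝ), HasDerivAt h (h' s) s := by
    intro s hs
    have hre : HasDerivAt (fun t => (φ t).re) (φ' s).re s := by
      exact (Complex.reCLM.hasFDerivAt.comp_hasDerivAt s (hφd s hs))
    have him : HasDerivAt (fun t => (φ t).im) (φ' s).im s := by
      exact (Complex.imCLM.hasFDerivAt.comp_hasDerivAt s (hφd s hs))
    have := (hre.pow 2).add (him.pow 2)
    exact this.congr_deriv (by simp [hh']; ring)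
  have hbound : ∀ s ∈ Ioi (0:ℝ), |h' s| ≤ F s := by
    intro s hs
    have hs0 : (0:ℝ) < s := hs
    have hqa : ‖φ s‖ ^ 2 = (φ s).re ^ 2 + (φ s).im ^ 2 := norm_sq_complex _
    have hqb : ‖φ' s‖ ^ 2 = (φ' s).re ^ 2 + (φ' s).im ^ 2 := norm_sq_complex _
    have hqc : ‖φ s / (s:ℂ)‖ = ‖φ s‖ / s := by
      rw [norm_div, Complex.norm_real, Real.norm_eq_abs, abs_of_pos hs0]
    have key : |h' s| * s ≤ ‖φ s‖ ^ 2 + s ^ 2 * ‖φ' s‖ ^ 2 := by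
      rw [hqa, hqb]
      rcases abs_cases (h' s) with ⟨he, _⟩ | ⟨he, _⟩ <;> rw [he] <;>
        simp only [hh'] <;>
        nlinarith [sq_nonneg ((φ s).re - s * (φ' s).re), sq_nonneg ((φ s).im - s * (φ' s).im),
          sq_nonneg ((φ s).re + s * (φ' s).re), sq_nonneg ((φ s).im + s * (φ' s).im)]
    have hFval : F s = ‖φ s‖ ^ 2 * s + ‖φ' s‖ ^ 2 * s + ‖φ s‖ ^ 2 / s := by
      simp only [hF, hqc]; field_simp
    rw [hFval]
    rw [← mul_le_mul_iff_of_pos_right hs0]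
    have e1 : (‖φ s‖ ^ 2 * s + ‖φ' s‖ ^ 2 * s + ‖φ s‖ ^ 2 / s) * s
        = ‖φ s‖ ^ 2 * s ^ 2 + ‖φ' s‖ ^ 2 * s ^ 2 + ‖φ s‖ ^ 2 := by
      field_simp
    rw [e1]
    nlinarith [key, sq_nonneg ‖φ s‖, sq_nonneg s, mul_nonneg (sq_nonneg ‖φ s‖) (sq_nonneg s)]
  -- measurability of h'
  have hφc : ContinuousOn φ (Ioi 0) := fun r hr =>
    ((hφd r hr).differentiableAt.continuousAt).continuousWithinAt
  have hφm : AEStronglyMeasurable φ (volume.restrict (Ioi 0)) :=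
    hφc.aestronglyMeasurable measurableSet_Ioi
  have hφ'm : AEStronglyMeasurable φ' (volume.restrict (Ioi 0)) := by
    refine (stronglyMeasurable_deriv φ).aestronglyMeasurable.congr ?_
    filter_upwards [ae_restrict_mem measurableSet_Ioi] with r hr
    exact (hφd r hr).deriv
  have hh'm : AEStronglyMeasurable h' (volume.restrict (Ioi 0)) := by
    apply AEStronglyMeasurable.const_mul
    exact ((Complex.continuous_re.comp_aestronglyMeasurable hφm).mul
        (Complex.continuous_re.comp_aestronglyMeasurable hφ'm)).add
      ((Complex.continuous_im.comp_aestronglyMeasurable hφm).mul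
        (Complex.continuous_im.comp_aestronglyMeasurable hφ'm))
  have hIcc : ∀ u v : ℝ, 0 < u → IntegrableOn h' (Icc u v) := by
    intro u v hu
    have hsub : Icc u v ⊆ Ioi 0 := fun x hx => lt_of_lt_of_le hu hx.1
    refine Integrable.mono' (hφi.mono_set hsub)
      (hh'm.mono_measure (Measure.restrict_mono hsub le_rfl)) ?_
    filter_upwards [ae_restrict_mem measurableSet_Icc] with x hx
    simpa [Real.norm_eq_abs] using hbound x (hsub hx)
  intro a ha
  have ha0 : (0:ℝ) < a := ha
  have hFTC : ∀ b, a ≤ b → h a ≤ h b + I := by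
    intro b hab
    have hsub : Icc a b ⊆ Ioi 0 := fun x hx => lt_of_lt_of_le ha0 hx.1
    have hint : IntervalIntegrable h' volume a b := by
      apply IntegrableOn.intervalIntegrable
      rw [uIcc_of_le hab]
      exact hIcc a b ha0
    have heq : ∫ s in a..b, h' s = h b - h a :=
      intervalIntegral.integral_eq_sub_of_hasDerivAt
        (fun s hs => hderiv s (hsub (by rwa [uIcc_of_le hab] at hs))) hint
    have h1 : |∫ s in a..b, h' s| ≤ ∫ s in a..b, |h' s| :=
      intervalIntegral.abs_integral_le_integral_abs hab
    have h2 : (∫ s in a..b, |h' s|) = ∫ s in Ioc a b, |h' s| :=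
      intervalIntegral.integral_of_le hab
    have hsub' : Ioc a b ⊆ Ioi 0 := fun x hx => lt_trans ha0 hx.1
    have h3 : (∫ s in Ioc a b, |h' s|) ≤ ∫ s in Ioc a b, F s := by
      refine setIntegral_mono_on ?_ (hφi.mono_set hsub') measurableSet_Ioc
        (fun x hx => hbound x (hsub' hx))
      exact ((hIcc a b ha0).mono_set Ioc_subset_Icc_self).abs
    have h4 : (∫ s in Ioc a b, F s) ≤ I := by
      refine setIntegral_mono_set hφi ?_ (HasSubset.Subset.eventuallyLE hsub')
      filter_upwards [ae_restrict_mem measurableSet_Ioi] with x hx using hF0 x hx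
    have := abs_le.1 (le_trans h1 (by rw [h2]; exact le_trans h3 h4) : |∫ s in a..b, h' s| ≤ I)
    linarith [this.1, heq ▸ this.1]
  have hfinal : h a ≤ I := by
    refine le_of_forall_pos_le_add ?_
    intro ε hε
    have hex : ∃ b, a ≤ b ∧ h b ≤ ε := by
      by_contra hcon
      push_neg at hcon
      have hconst : IntegrableOn (fun _ : ℝ => ε * a) (Ioi a) := by
        refine Integrable.mono' (hφi.mono_set (Ioi_subset_Ioi ha0.le))
          aestronglyMeasurable_const ?_
        filter_upwards [ae_restrict_mem measurableSet_Ioi] with x hx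
        have hx0 : (0:ℝ) < x := lt_trans ha0 hx
        have h1 : ε < h x := hcon x (le_of_lt hx)
        have h2 : ‖φ x‖ ^ 2 = h x := hnorm x
        have : ε * a ≤ F x := by
          have hb := sq_nonneg ‖φ' x‖
          have hc := sq_nonneg ‖φ x / (x:ℂ)‖
          have hxa : a < x := hx
          simp only [hF]
          nlinarith [h1, h2, hxa, hε, hb, hc, hx0, ha0,
            mul_nonneg hb hx0.le, mul_nonneg hc hx0.le]
        have : ‖ε * a‖ ≤ F x := by
          rwa [Real.norm_eq_abs, abs_of_pos (mul_pos hε ha0)]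
        exact this
      rcases integrable_const_iff.1 hconst with hz | hm
      · exact absurd hz (ne_of_gt (mul_pos hε ha0))
      · have hm := hm.measure_univ_lt_top; rw [Measure.restrict_apply_univ, Real.volume_Ioi] at hm
        exact absurd hm (lt_irrefl _)
    obtain ⟨b, hab, hbε⟩ := hex
    have := hFTC b hab
    linarith
  rw [hnorm a]; exact hfinal

set_option maxHeartbeats 1000000 in
/-- If `g ∈ L^∞` with `∂_r g ∈ L²_e`, and `φ ∈ H¹_e`, then `gφ ∈ H¹_e` with
`‖gφ‖_{H¹_e} ≤ C(‖g‖_{L^∞} + ‖∂_r g‖_{L²_e}) ‖φ‖_{H¹_e}`. -/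

theorem stmt_10 :
    ∃ C > 0, ∀ (g g' φ φ' : ℝ → ℂ) (M : ℝ),
      (∀ r ∈ Ioi (0:ℝ), ‖g r‖ ≤ M) →
      (∀ r ∈ Ioi (0:ℝ), HasDerivAt g (g' r) r) →
      IntegrableOn (fun r => ‖g' r‖ ^ 2 * r) (Ioi 0) →
      (∀ r ∈ Ioi (0:ℝ), HasDerivAt φ (φ' r) r) →
      IntegrableOn (fun r =>
        (‖φ r‖ ^ 2 + ‖φ' r‖ ^ 2 + ‖φ r / (r : ℂ)‖ ^ 2) * r) (Ioi 0) →
      IntegrableOn (fun r =>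
          (‖g r * φ r‖ ^ 2 + ‖g' r * φ r + g r * φ' r‖ ^ 2 +
            ‖g r * φ r / (r : ℂ)‖ ^ 2) * r) (Ioi 0) ∧
      Real.sqrt (∫ r in Ioi (0:ℝ),
          (‖g r * φ r‖ ^ 2 + ‖g' r * φ r + g r * φ' r‖ ^ 2 +
            ‖g r * φ r / (r : ℂ)‖ ^ 2) * r) ≤
        C * (M + Real.sqrt (∫ r in Ioi (0:ℝ), ‖g' r‖ ^ 2 * r)) *
          Real.sqrt (∫ r in Ioi (0:ℝ),
            (‖φ r‖ ^ 2 + ‖φ' r‖ ^ 2 + ‖φ r / (r : ℂ)‖ ^ 2) * r) := by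
  refine ⟨2, by norm_num, ?_⟩
  intro g g' φ φ' M hgM hgd hg'i hφd hφi
  have hM0 : 0 ≤ M := le_trans (norm_nonneg _) (hgM 1 (by norm_num))
  set F : ℝ → ℝ := fun r => (‖φ r‖ ^ 2 + ‖φ' r‖ ^ 2 + ‖φ r / (r : ℂ)‖ ^ 2) * r with hF
  set P : ℝ → ℝ := fun r => (‖g r * φ r‖ ^ 2 + ‖g' r * φ r + g r * φ' r‖ ^ 2 +
      ‖g r * φ r / (r : ℂ)‖ ^ 2) * r with hP
  set I : ℝ := ∫ r in Ioi (0:ℝ), F r with hI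
  have hF0 : ∀ r ∈ Ioi (0:ℝ), 0 ≤ F r := by
    intro r hr; have : (0:ℝ) < r := hr; positivity
  have hI0 : 0 ≤ I := setIntegral_nonneg measurableSet_Ioi hF0
  have hJ0 : 0 ≤ ∫ r in Ioi (0:ℝ), ‖g' r‖ ^ 2 * r := by
    refine setIntegral_nonneg measurableSet_Ioi ?_
    intro r hr; have : (0:ℝ) < r := hr; positivity
  set A : ℝ := Real.sqrt (∫ r in Ioi (0:ℝ), ‖g' r‖ ^ 2 * r) with hA
  have hA0 : 0 ≤ A := Real.sqrt_nonneg _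
  have hA2 : A ^ 2 = ∫ r in Ioi (0:ℝ), ‖g' r‖ ^ 2 * r := Real.sq_sqrt hJ0
  have hlinf := linf_bound φ φ' hφd hφi
  -- pointwise bound
  have hpt : ∀ r ∈ Ioi (0:ℝ), P r ≤ 2 * M ^ 2 * F r + 2 * I * (‖g' r‖ ^ 2 * r) := by
    intro r hr
    have hr0 : (0:ℝ) < r := hr
    have e1 : ‖g r * φ r‖ ≤ M * ‖φ r‖ := by
      rw [norm_mul]; exact mul_le_mul_of_nonneg_right (hgM r hr) (norm_nonneg _)
    have e2 : ‖g r * φ r / (r:ℂ)‖ ≤ M * ‖φ r / (r:ℂ)‖ := by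
      rw [mul_div_assoc, norm_mul]
      exact mul_le_mul_of_nonneg_right (hgM r hr) (norm_nonneg _)
    have e3 : ‖g' r * φ r + g r * φ' r‖ ≤ ‖g' r‖ * ‖φ r‖ + M * ‖φ' r‖ := by
      refine (norm_add_le _ _).trans ?_
      rw [norm_mul, norm_mul]
      gcongr
      exact hgM r hr
    have s1 : ‖g r * φ r‖ ^ 2 ≤ (M * ‖φ r‖) ^ 2 := by
      exact pow_le_pow_left₀ (norm_nonneg _) e1 2
    have s2 : ‖g r * φ r / (r:ℂ)‖ ^ 2 ≤ (M * ‖φ r / (r:ℂ)‖) ^ 2 :=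
      pow_le_pow_left₀ (norm_nonneg _) e2 2
    have s3 : ‖g' r * φ r + g r * φ' r‖ ^ 2 ≤ (‖g' r‖ * ‖φ r‖ + M * ‖φ' r‖) ^ 2 :=
      pow_le_pow_left₀ (norm_nonneg _) e3 2
    have haI : ‖φ r‖ ^ 2 ≤ I := hlinf r hr
    have hsum : ‖g r * φ r‖ ^ 2 + ‖g' r * φ r + g r * φ' r‖ ^ 2 +
        ‖g r * φ r / (r:ℂ)‖ ^ 2 ≤
        2 * M ^ 2 * (‖φ r‖ ^ 2 + ‖φ' r‖ ^ 2 + ‖φ r / (r:ℂ)‖ ^ 2) + 2 * I * ‖g' r‖ ^ 2 := by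
      nlinarith [s1, s2, s3, haI, sq_nonneg (‖g' r‖ * ‖φ r‖ - M * ‖φ' r‖),
        sq_nonneg ‖g' r‖, sq_nonneg ‖φ r‖, sq_nonneg ‖φ' r‖, sq_nonneg ‖φ r / (r:ℂ)‖,
        sq_nonneg M, mul_nonneg (sq_nonneg ‖g' r‖) (sub_nonneg.2 haI)]
    calc P r ≤ (2 * M ^ 2 * (‖φ r‖ ^ 2 + ‖φ' r‖ ^ 2 + ‖φ r / (r:ℂ)‖ ^ 2)
          + 2 * I * ‖g' r‖ ^ 2) * r := mul_le_mul_of_nonneg_right hsum hr0.le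
      _ = 2 * M ^ 2 * F r + 2 * I * (‖g' r‖ ^ 2 * r) := by simp only [hF]; ring
  -- measurability
  have hgc : ContinuousOn g (Ioi 0) := fun r hr =>
    ((hgd r hr).differentiableAt.continuousAt).continuousWithinAt
  have hφc : ContinuousOn φ (Ioi 0) := fun r hr =>
    ((hφd r hr).differentiableAt.continuousAt).continuousWithinAt
  have hgm : AEStronglyMeasurable g (volume.restrict (Ioi 0)) :=
    hgc.aestronglyMeasurable measurableSet_Ioi
  have hφm : AEStronglyMeasurable φ (volume.restrict (Ioi 0)) :=
    hφc.aestronglyMeasurable measurableSet_Ioi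
  have hg'm : AEStronglyMeasurable g' (volume.restrict (Ioi 0)) := by
    refine (stronglyMeasurable_deriv g).aestronglyMeasurable.congr ?_
    filter_upwards [ae_restrict_mem measurableSet_Ioi] with r hr
    exact (hgd r hr).deriv
  have hφ'm : AEStronglyMeasurable φ' (volume.restrict (Ioi 0)) := by
    refine (stronglyMeasurable_deriv φ).aestronglyMeasurable.congr ?_
    filter_upwards [ae_restrict_mem measurableSet_Ioi] with r hr
    exact (hφd r hr).deriv
  have hinvm : AEStronglyMeasurable (fun r : ℝ => ((r : ℂ))⁻¹) (volume.restrict (Ioi 0)) := by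
    refine ContinuousOn.aestronglyMeasurable ?_ measurableSet_Ioi
    exact ContinuousOn.inv₀ Complex.continuous_ofReal.continuousOn
      (fun r hr => Complex.ofReal_ne_zero.2 (ne_of_gt hr))
  have hdivm : AEStronglyMeasurable (fun r => g r * φ r / (r : ℂ))
      (volume.restrict (Ioi 0)) := by
    simp only [div_eq_mul_inv]
    exact (hgm.mul hφm).mul hinvm
  have hPm : AEStronglyMeasurable P (volume.restrict (Ioi 0)) := by
    apply AEStronglyMeasurable.mul
    · exact ((((hgm.mul hφm).norm.pow 2).add
        (((hg'm.mul hφm).add (hgm.mul hφ'm)).norm.pow 2)).add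
        (hdivm.norm.pow 2))
    · exact aestronglyMeasurable_id
  set G : ℝ → ℝ := fun r => 2 * M ^ 2 * F r + 2 * I * (‖g' r‖ ^ 2 * r) with hG
  have hφi' : IntegrableOn (fun r => 2 * M ^ 2 * F r) (Ioi 0) := hφi.const_mul (2 * M ^ 2)
  have hg'i' : IntegrableOn (fun r => 2 * I * (‖g' r‖ ^ 2 * r)) (Ioi 0) :=
    hg'i.const_mul (2 * I)
  have hGint : IntegrableOn G (Ioi 0) := hφi'.add hg'i'
  have hPint : IntegrableOn P (Ioi 0) := by
    refine Integrable.mono' hGint hPm ?_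
    filter_upwards [ae_restrict_mem measurableSet_Ioi] with r hr
    have hr0 : (0:ℝ) < r := hr
    have hP0 : 0 ≤ P r := by simp only [hP]; positivity
    rw [Real.norm_eq_abs, abs_of_nonneg hP0]
    exact hpt r hr
  refine ⟨hPint, ?_⟩
  have hle : (∫ r in Ioi (0:ℝ), P r) ≤ ∫ r in Ioi (0:ℝ), G r :=
    setIntegral_mono_on hPint hGint measurableSet_Ioi hpt
  have hGval : (∫ r in Ioi (0:ℝ), G r) = 2 * M ^ 2 * I + 2 * I * A ^ 2 := by
    rw [hG, integral_add hφi' hg'i', integral_const_mul, integral_const_mul, hA2]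
  have hfin : (∫ r in Ioi (0:ℝ), P r) ≤ (2 * (M + A)) ^ 2 * I := by
    rw [hGval] at hle
    nlinarith [hle, hI0, hM0, hA0, mul_nonneg (mul_nonneg hM0 hA0) hI0]
  calc Real.sqrt (∫ r in Ioi (0:ℝ), P r) ≤ Real.sqrt ((2 * (M + A)) ^ 2 * I) :=
        Real.sqrt_le_sqrt hfin
    _ = 2 * (M + A) * Real.sqrt I := by
        rw [Real.sqrt_mul (sq_nonneg _), Real.sqrt_sq (by positivity)]
end

section
/- For m ∈ ℕ and f:(0,∞)→ℂ with f ∈ H¹_e, define S(f)(x) = e^{i(m+1)θ} f(r) in polar coordinates on ℝ². Then S(f) ∈ H¹(ℝ²) and ‖f‖_{H¹_e} is equivalent to ‖S(f)‖_{H¹(ℝ²)}; conversely if S(f) ∈ H¹(ℝ²) then f ∈ H¹_e. -/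
open MeasureTheory Set Real

/-- The `(m+1)`-equivariant extension `S(f)(x) = e^{i(m+1)θ} f(r)`, written via
`e^{iθ} = x/|x|` on `ℂ ≃ ℝ²`. -/
noncomputable def Smap (m : ℕ) (f : ℝ → ℂ) : ℂ → ℂ :=
  fun x => (x / (‖x‖ : ℂ)) ^ (m + 1) * f ‖x‖

/-- Squared gradient `|∂_x F|² + |∂_y F|²` of `F : ℂ → ℂ`. -/
noncomputable def gradSq (F : ℂ → ℂ) (x : ℂ) : ℝ :=
  ‖fderiv ℝ F x 1‖ ^ 2 + ‖fderiv ℝ F x Complex.I‖ ^ 2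

section Aux

lemma normSq_term (z : ℂ) : ‖z‖ ^ 2 = z.re ^ 2 + z.im ^ 2 := by
  rw [Complex.sq_norm, Complex.normSq_apply]; ring


lemma keyL (A B : ℂ) (a b : ℝ) :
    ‖A + a • B‖ ^ 2 + ‖Complex.I * A + b • B‖ ^ 2
      = 2 * ‖A‖ ^ 2 + (a ^ 2 + b ^ 2) * ‖B‖ ^ 2
        + 2 * (a * ((starRingEnd ℂ) A * B).re + b * ((starRingEnd ℂ) A * B).im) := by
  simp only [normSq_term, Complex.add_re, Complex.add_im, Complex.mul_re, Complex.mul_im,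
    Complex.I_re, Complex.I_im, Complex.real_smul, Complex.ofReal_re, Complex.ofReal_im,
    Complex.conj_re, Complex.conj_im]
  ring

lemma normSq_add_smul (c c' : ℂ) (p q : ℝ) :
    ‖q • c' + p • c‖ ^ 2 = q ^ 2 * ‖c'‖ ^ 2 + p ^ 2 * ‖c‖ ^ 2
      + 2 * q * p * ((starRingEnd ℂ) c * c').re := by
  simp only [normSq_term, Complex.add_re, Complex.add_im, Complex.mul_re, Complex.mul_im,
    Complex.real_smul, Complex.ofReal_re, Complex.ofReal_im, Complex.conj_re, Complex.conj_im]
  ring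

lemma re_conj_mul (c c' : ℂ) (p q : ℝ) :
    ((starRingEnd ℂ) c * (q • c' + p • c)).re
      = q * ((starRingEnd ℂ) c * c').re + p * ‖c‖ ^ 2 := by
  simp only [normSq_term, Complex.add_re, Complex.add_im, Complex.mul_re, Complex.mul_im,
    Complex.real_smul, Complex.ofReal_re, Complex.ofReal_im, Complex.conj_re, Complex.conj_im]
  ring

lemma re_dot (x C : ℂ) : x.re * C.re + x.im * C.im = ((starRingEnd ℂ) x * C).re := by
  simp only [Complex.mul_re, Complex.conj_re, Complex.conj_im]; ring

lemma conj_mul_self (z : ℂ) : (starRingEnd ℂ) z * z = ((‖z‖ ^ 2 : ℝ) : ℂ) := by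
  rw [mul_comm, Complex.mul_conj, Complex.normSq_eq_norm_sq]

lemma final_algebra (m : ℕ) (x c c' A Bv : ℂ) (r pr qr : ℝ) (hr : 0 < r) (hxr : ‖x‖ = r)
    (hqr : qr = (r ^ (m+1))⁻¹) (hpr : pr = -(((m:ℝ)+1) * r ^ m) / (r ^ (m+1)) ^ 2)
    (hA : A = (((m:ℝ)+1) / r ^ (m+1)) • (c * x ^ m))
    (hB : Bv = x ^ m * x * (qr • c' + pr • c)) :
    ‖A + (x.re / r) • Bv‖ ^ 2 + ‖Complex.I * A + (x.im / r) • Bv‖ ^ 2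
      = ‖c'‖ ^ 2 + ((m:ℝ) + 1) ^ 2 * ‖c‖ ^ 2 / r ^ 2 := by
  have hrne : r ≠ 0 := hr.ne'
  have hx2 : (x.re / r) ^ 2 + (x.im / r) ^ 2 = 1 := by
    have h := normSq_term x
    rw [hxr] at h
    field_simp
    linarith
  have hnA : ‖A‖ ^ 2 = (((m:ℝ)+1) / r ^ (m+1)) ^ 2 * (‖c‖ ^ 2 * (r ^ m) ^ 2) := by
    rw [hA, norm_smul, norm_mul, norm_pow, hxr, Real.norm_eq_abs]
    rw [mul_pow, sq_abs, mul_pow]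
  have hnB : ‖Bv‖ ^ 2 = (r ^ m * r) ^ 2 * (qr ^ 2 * ‖c'‖ ^ 2 + pr ^ 2 * ‖c‖ ^ 2
      + 2 * qr * pr * ((starRingEnd ℂ) c * c').re) := by
    rw [hB, norm_mul, norm_mul, norm_pow, hxr, mul_pow, mul_pow, normSq_add_smul]
  have hstep : (starRingEnd ℂ) x * ((starRingEnd ℂ) A * Bv)
      = ((((m:ℝ)+1) / r ^ (m+1) : ℝ) : ℂ) * ((starRingEnd ℂ) c * (qr • c' + pr • c))
          * ((starRingEnd ℂ) (x ^ m) * x ^ m) * ((starRingEnd ℂ) x * x) := by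
    rw [hA, hB, Complex.real_smul, map_mul, map_mul, Complex.conj_ofReal]
    ring
  rw [conj_mul_self, conj_mul_self, norm_pow, hxr] at hstep
  have hre : ((starRingEnd ℂ) x * ((starRingEnd ℂ) A * Bv)).re
      = (((m:ℝ)+1) / r ^ (m+1)) * ((starRingEnd ℂ) c * (qr • c' + pr • c)).re
          * ((r ^ m) ^ 2) * (r ^ 2) := by
    rw [hstep]
    simp only [Complex.mul_re, Complex.mul_im, Complex.ofReal_re, Complex.ofReal_im]
    ring
  rw [re_conj_mul] at hre
  rw [keyL, hx2, hnA, hnB]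
  have hdot : (x.re / r) * ((starRingEnd ℂ) A * Bv).re + (x.im / r) * ((starRingEnd ℂ) A * Bv).im
      = ((starRingEnd ℂ) x * ((starRingEnd ℂ) A * Bv)).re / r := by
    rw [← re_dot x ((starRingEnd ℂ) A * Bv)]
    ring
  rw [hdot, hre, hqr, hpr]
  have hme : r ^ (m+1) ≠ 0 := pow_ne_zero _ hrne
  field_simp
  ring

lemma norm_Smap (m : ℕ) (f : ℝ → ℂ) (x : ℂ) (hx : x ≠ 0) : ‖Smap m f x‖ = ‖f ‖x‖‖ := by
  have h0 : ‖x‖ ≠ 0 := norm_ne_zero_iff.mpr hx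
  have h1 : ‖x / (‖x‖ : ℂ)‖ = 1 := by
    rw [norm_div, Complex.norm_real, norm_norm, div_self h0]
  rw [Smap, norm_mul, norm_pow, h1, one_pow, one_mul]

lemma hasFDeriv_Smap (m : ℕ) (f f' : ℝ → ℂ) (hderiv : ∀ r ∈ Ioi (0:ℝ), HasDerivAt f (f' r) r)
    (x : ℂ) (hx : x ≠ 0) :
    HasFDerivAt (Smap m f)
      (x ^ (m+1) • ((ContinuousLinearMap.smulRight (1 : ℝ →L[ℝ] ℝ)
          (((‖x‖ ^ (m+1))⁻¹) • f' ‖x‖ + (-(((m:ℝ)+1) * ‖x‖ ^ m) / (‖x‖ ^ (m+1)) ^ 2) • f ‖x‖)).comp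
            ((1 / (2 * ‖x‖)) • ((x.re • Complex.reCLM + x.re • Complex.reCLM)
              + (x.im • Complex.imCLM + x.im • Complex.imCLM))))
        + ((‖x‖ ^ (m+1))⁻¹ • f ‖x‖) • ((ContinuousLinearMap.smulRight (1 : ℂ →L[ℂ] ℂ)
            (((m:ℂ)+1) * x ^ m)).restrictScalars ℝ)) x := by
  have hr : 0 < ‖x‖ := norm_pos_iff.mpr hx
  have hrpow : HasDerivAt (fun t : ℝ => t ^ (m+1)) (((m:ℝ)+1) * ‖x‖ ^ m) ‖x‖ := by
    simpa using hasDerivAt_pow (m+1) ‖x‖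
  have hu : HasDerivAt (fun t : ℝ => (t ^ (m+1))⁻¹)
      (-(((m:ℝ)+1) * ‖x‖ ^ m) / (‖x‖ ^ (m+1)) ^ 2) ‖x‖ := hrpow.inv (pow_ne_zero _ hr.ne')
  have hg : HasDerivAt (fun t : ℝ => (t ^ (m+1))⁻¹ • f t)
      ((‖x‖ ^ (m+1))⁻¹ • f' ‖x‖ + (-(((m:ℝ)+1) * ‖x‖ ^ m) / (‖x‖ ^ (m+1)) ^ 2) • f ‖x‖) ‖x‖ := by
    exact hu.smul (hderiv ‖x‖ hr)
  -- derivative of the norm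
  have hq0 : x.re * x.re + x.im * x.im ≠ 0 := by
    have := Complex.normSq_pos.mpr hx
    rw [Complex.normSq_apply] at this
    exact this.ne'
  have hsqv : Real.sqrt (x.re * x.re + x.im * x.im) = ‖x‖ := by
    rw [← Complex.normSq_apply, ← Complex.norm_def]
  have hqd : HasFDerivAt (fun y : ℂ => y.re * y.re + y.im * y.im)
      ((x.re • Complex.reCLM + x.re • Complex.reCLM)
        + (x.im • Complex.imCLM + x.im • Complex.imCLM)) x :=
    (Complex.reCLM.hasFDerivAt.mul Complex.reCLM.hasFDerivAt).add
      (Complex.imCLM.hasFDerivAt.mul Complex.imCLM.hasFDerivAt)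
  have hnorm : HasFDerivAt (fun y : ℂ => ‖y‖)
      ((1 / (2 * ‖x‖)) • ((x.re • Complex.reCLM + x.re • Complex.reCLM)
        + (x.im • Complex.imCLM + x.im • Complex.imCLM))) x := by
    have h1 : HasDerivAt Real.sqrt (1 / (2 * Real.sqrt (x.re * x.re + x.im * x.im)))
        (x.re * x.re + x.im * x.im) := Real.hasDerivAt_sqrt hq0
    have h2 := h1.comp_hasFDerivAt x hqd
    have h3 : (Real.sqrt ∘ fun y : ℂ => y.re * y.re + y.im * y.im) = fun y : ℂ => ‖y‖ := by
      funext y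
      simp only [Function.comp_apply]
      rw [← Complex.normSq_apply, ← Complex.norm_def]
    rw [h3, hsqv] at h2
    exact h2
  have hcompose : HasFDerivAt (fun y : ℂ => (‖y‖ ^ (m+1))⁻¹ • f ‖y‖)
      ((ContinuousLinearMap.smulRight (1 : ℝ →L[ℝ] ℝ)
          (((‖x‖ ^ (m+1))⁻¹) • f' ‖x‖ + (-(((m:ℝ)+1) * ‖x‖ ^ m) / (‖x‖ ^ (m+1)) ^ 2) • f ‖x‖)).comp
        ((1 / (2 * ‖x‖)) • ((x.re • Complex.reCLM + x.re • Complex.reCLM)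
          + (x.im • Complex.imCLM + x.im • Complex.imCLM)))) x :=
    hg.hasFDerivAt.comp x hnorm
  have hpow : HasFDerivAt (fun y : ℂ => y ^ (m+1))
      ((ContinuousLinearMap.smulRight (1 : ℂ →L[ℂ] ℂ) (((m:ℂ)+1) * x ^ m)).restrictScalars ℝ) x := by
    have h := ((hasDerivAt_pow (m+1) x).hasFDerivAt).restrictScalars ℝ
    simpa [ContinuousLinearMap.smulRight_one_eq_toSpanSingleton] using h
  have hprod := hpow.mul hcompose
  have hev : Smap m f =ᶠ[nhds x] fun y : ℂ => y ^ (m+1) * ((‖y‖ ^ (m+1))⁻¹ • f ‖y‖) := by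
    filter_upwards [isOpen_compl_singleton.mem_nhds hx] with y hy
    have hy0 : (y : ℂ) ≠ 0 := hy
    have hny : (‖y‖ : ℝ) ≠ 0 := norm_ne_zero_iff.mpr hy0
    have hnyC : ((‖y‖ : ℝ) : ℂ) ≠ 0 := Complex.ofReal_ne_zero.mpr hny
    show (y / (‖y‖ : ℂ)) ^ (m + 1) * f ‖y‖ = _
    rw [div_pow, Complex.real_smul]
    push_cast
    field_simp
  exact hprod.congr_of_eventuallyEq hev

lemma gradSq_Smap (m : ℕ) (f f' : ℝ → ℂ) (hderiv : ∀ r ∈ Ioi (0:ℝ), HasDerivAt f (f' r) r)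
    (x : ℂ) (hx : x ≠ 0) :
    gradSq (Smap m f) x = ‖f' ‖x‖‖ ^ 2 + ((m:ℝ) + 1) ^ 2 * ‖f ‖x‖‖ ^ 2 / ‖x‖ ^ 2 := by
  have hr : 0 < ‖x‖ := norm_pos_iff.mpr hx
  have hrne : (‖x‖ : ℝ) ≠ 0 := hr.ne'
  have hrC : ((‖x‖ : ℝ) : ℂ) ≠ 0 := Complex.ofReal_ne_zero.mpr hrne
  have hS := hasFDeriv_Smap m f f' hderiv x hx
  have hf1 : fderiv ℝ (Smap m f) x 1
      = (((m:ℝ)+1) / ‖x‖ ^ (m+1)) • (f ‖x‖ * x ^ m)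
        + (x.re / ‖x‖) • (x ^ m * x * ((‖x‖ ^ (m+1))⁻¹ • f' ‖x‖
            + (-(((m:ℝ)+1) * ‖x‖ ^ m) / (‖x‖ ^ (m+1)) ^ 2) • f ‖x‖)) := by
    rw [hS.fderiv]
    simp only [ContinuousLinearMap.add_apply, ContinuousLinearMap.smul_apply,
      ContinuousLinearMap.coe_comp', Function.comp_apply, ContinuousLinearMap.coe_smul',
      Pi.smul_apply, ContinuousLinearMap.smulRight_apply, ContinuousLinearMap.one_apply,
      ContinuousLinearMap.coe_restrictScalars', Complex.reCLM_apply, Complex.imCLM_apply,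
      Complex.one_re, Complex.one_im, Complex.real_smul, smul_eq_mul]
    push_cast
    field_simp
    ring
  have hfI : fderiv ℝ (Smap m f) x Complex.I
      = Complex.I * ((((m:ℝ)+1) / ‖x‖ ^ (m+1)) • (f ‖x‖ * x ^ m))
        + (x.im / ‖x‖) • (x ^ m * x * ((‖x‖ ^ (m+1))⁻¹ • f' ‖x‖
            + (-(((m:ℝ)+1) * ‖x‖ ^ m) / (‖x‖ ^ (m+1)) ^ 2) • f ‖x‖)) := by
    rw [hS.fderiv]
    simp only [ContinuousLinearMap.add_apply, ContinuousLinearMap.smul_apply,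
      ContinuousLinearMap.coe_comp', Function.comp_apply, ContinuousLinearMap.coe_smul',
      Pi.smul_apply, ContinuousLinearMap.smulRight_apply, ContinuousLinearMap.one_apply,
      ContinuousLinearMap.coe_restrictScalars', Complex.reCLM_apply, Complex.imCLM_apply,
      Complex.I_re, Complex.I_im, Complex.real_smul, smul_eq_mul]
    push_cast
    field_simp
    ring
  rw [gradSq, hf1, hfI]
  exact final_algebra m x (f ‖x‖) (f' ‖x‖) _ _ ‖x‖ _ _ hr rfl rfl rfl rfl rfl

lemma measure_Ioo_pi : (volume (Ioo (-π) π)).toReal = 2 * π := by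
  rw [Real.volume_Ioo, sub_neg_eq_add, ENNReal.toReal_ofReal (by positivity)]
  ring

lemma prod_iff (F : ℝ → ℝ) (hF : AEStronglyMeasurable F (volume.restrict (Ioi 0))) :
    IntegrableOn (fun p : ℝ × ℝ => F p.1) (Ioi (0:ℝ) ×ˢ Ioo (-π) π) ↔
      IntegrableOn F (Ioi 0) := by
  haveI : IsFiniteMeasure (volume.restrict (Ioo (-π) π)) :=
    ⟨by rw [Measure.restrict_apply_univ]; simp [Real.volume_Ioo]⟩
  rw [IntegrableOn, Measure.volume_eq_prod, ← Measure.prod_restrict]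
  rw [integrable_prod_iff hF.comp_fst]
  have hconst : (fun x : ℝ => ∫ _ : ℝ, ‖F x‖ ∂(volume.restrict (Ioo (-π) π)))
      = fun x => (2 * π) * ‖F x‖ := by
    funext x
    rw [integral_const, measureReal_restrict_apply_univ, measureReal_def, measure_Ioo_pi, smul_eq_mul]
  constructor
  · rintro ⟨-, h2⟩
    rw [hconst] at h2
    have h3 := h2.const_mul ((2 * π)⁻¹)
    have h4 : (fun x => (2 * π)⁻¹ * ((2 * π) * ‖F x‖)) = fun x => ‖F x‖ := by
      funext x
      field_simp
    rw [h4] at h3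
    exact (integrable_norm_iff hF).mp h3
  · intro h
    refine ⟨Filter.Eventually.of_forall fun x => integrable_const (F x), ?_⟩
    rw [hconst]
    exact h.norm.const_mul _

lemma radial (H : ℂ → ℝ) (F : ℝ → ℝ)
    (hF : AEStronglyMeasurable F (volume.restrict (Ioi 0)))
    (hpt : ∀ p : ℝ × ℝ, p ∈ polarCoord.target → p.1 • H (Complex.polarCoord.symm p) = F p.1) :
    (Integrable H ↔ IntegrableOn F (Ioi 0)) ∧
      ∫ x, H x = 2 * π * ∫ r in Ioi (0:ℝ), F r := by
  have htar : polarCoord.target = Ioi (0:ℝ) ×ˢ Ioo (-π) π := rfl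
  constructor
  · -- integrability
    have h1 : Integrable (H ∘ Complex.measurableEquivRealProd.symm) ↔ Integrable H :=
      (Complex.volume_preserving_equiv_real_prod.symm).integrable_comp_emb
        (MeasurableEquiv.measurableEmbedding _)
    rw [← h1, ← integrableOn_univ]
    have h2 : IntegrableOn (H ∘ Complex.measurableEquivRealProd.symm) univ ↔
        IntegrableOn (H ∘ Complex.measurableEquivRealProd.symm) polarCoord.source :=
      ⟨fun h => h.congr_set_ae polarCoord_source_ae_eq_univ,
       fun h => h.congr_set_ae polarCoord_source_ae_eq_univ.symm⟩
    rw [h2, ← polarCoord.symm_image_target_eq_source]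
    set B : ℝ × ℝ → ℝ × ℝ →L[ℝ] ℝ × ℝ := fun p =>
      LinearMap.toContinuousLinearMap (Matrix.toLin (Module.Basis.finTwoProd ℝ) (Module.Basis.finTwoProd ℝ)
        !![cos p.2, -p.1 * sin p.2; sin p.2, p.1 * cos p.2]) with hB
    have B_det : ∀ p, (B p).det = p.1 := by
      intro p
      conv_rhs => rw [← one_mul p.1, ← cos_sq_add_sin_sq p.2]
      simp only [hB, neg_mul, LinearMap.det_toContinuousLinearMap, LinearMap.det_toLin,
        Matrix.det_fin_two_of, sub_neg_eq_add]
      ring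
    rw [integrableOn_image_iff_integrableOn_abs_det_fderiv_smul volume
      polarCoord.open_target.measurableSet
      (fun p _ => (hasFDerivAt_polarCoord_symm p).hasFDerivWithinAt)
      polarCoord.symm.injOn (H ∘ Complex.measurableEquivRealProd.symm)]
    have h4 : EqOn (fun p : ℝ × ℝ => |(B p).det| • (H ∘ Complex.measurableEquivRealProd.symm)
        (polarCoord.symm p)) (fun p : ℝ × ℝ => F p.1) polarCoord.target := by
      intro p hp
      have hp1 : 0 < p.1 := hp.1
      have : (H ∘ Complex.measurableEquivRealProd.symm) (polarCoord.symm p)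
          = H (Complex.polarCoord.symm p) := rfl
      simp only [this, B_det, abs_of_pos hp1]
      exact hpt p hp
    refine (integrableOn_congr_fun h4 polarCoord.open_target.measurableSet).trans ?_
    rw [htar]
    exact prod_iff F hF
  · -- integral
    rw [← Complex.integral_comp_polarCoord_symm H,
      setIntegral_congr_fun polarCoord.open_target.measurableSet hpt, htar]
    have h5 : (fun p : ℝ × ℝ => F p.1) = fun p : ℝ × ℝ => F p.1 * (fun _ : ℝ => (1:ℝ)) p.2 := by
      funext p; simp
    rw [Measure.volume_eq_prod, h5, setIntegral_prod_mul F (fun _ => (1:ℝ))]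
    rw [setIntegral_const, smul_eq_mul, mul_one, measureReal_def, measure_Ioo_pi]
    ring

open Filter in
lemma f'_aemeasurable (f f' : ℝ → ℂ) (hderiv : ∀ r ∈ Ioi (0:ℝ), HasDerivAt f (f' r) r) :
    AEMeasurable f' (volume.restrict (Ioi 0)) := by
  have hfc : ContinuousOn f (Ioi 0) := fun t ht => ((hderiv t ht).continuousAt).continuousWithinAt
  set g : ℕ → ℝ → ℂ := fun n t => (1 / ((n:ℝ)+1))⁻¹ • (f (t + 1 / ((n:ℝ)+1)) - f t) with hg
  have hgm : ∀ n, AEMeasurable (g n) (volume.restrict (Ioi 0)) := by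
    intro n
    have hpos : 0 < 1 / ((n:ℝ)+1) := by positivity
    have hcont : ContinuousOn (fun t => f (t + 1 / ((n:ℝ)+1))) (Ioi 0) := by
      apply hfc.comp (Continuous.continuousOn (by continuity))
      intro t ht
      exact lt_trans ht (by linarith : t < t + 1 / ((n:ℝ)+1)) |>.trans_le (le_refl _) |> fun h => h
    exact ((hcont.sub hfc).const_smul ((1 / ((n:ℝ)+1))⁻¹)).aemeasurable measurableSet_Ioi
  have htend : ∀ t ∈ Ioi (0:ℝ), Tendsto (fun n => g n t) atTop (nhds (f' t)) := by
    intro t ht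
    have h := (hderiv t ht)
    rw [hasDerivAt_iff_tendsto_slope] at h
    have hseq : Tendsto (fun n : ℕ => t + 1 / ((n:ℝ)+1)) atTop (nhdsWithin t {t}ᶜ) := by
      apply tendsto_nhdsWithin_of_tendsto_nhds_of_eventually_within
      · have : Tendsto (fun n : ℕ => 1 / ((n:ℝ)+1)) atTop (nhds 0) :=
          tendsto_one_div_add_atTop_nhds_zero_nat
        simpa using tendsto_const_nhds.add this
      · refine Filter.Eventually.of_forall fun n => ?_
        have : 0 < 1 / ((n:ℝ)+1) := by positivity
        simp only [mem_compl_iff, mem_singleton_iff]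
        intro hcontra
        nlinarith [hcontra]
    have h2 := h.comp hseq
    have h3 : (fun n : ℕ => slope f t (t + 1 / ((n:ℝ)+1))) = fun n => g n t := by
      funext n
      rw [slope_def_module]
      simp [hg]
    rw [← h3]
    exact h2
  apply aemeasurable_of_tendsto_metrizable_ae' hgm
  filter_upwards [ae_restrict_mem measurableSet_Ioi] with t ht
  exact htend t ht

end Aux

/-- `S(f) ∈ H¹(ℝ²)` iff `f ∈ H¹_e`, with the exact norm identity
`∫_{ℝ²} (|Sf|² + |∇Sf|²) = 2π ∫₀^∞ (|f|² + |∂_r f|² + (m+1)²|f|²/r²) r dr`. -/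
theorem stmt_11 (m : ℕ) (f f' : ℝ → ℂ)
    (hderiv : ∀ r ∈ Ioi (0:ℝ), HasDerivAt f (f' r) r) :
    (Integrable (fun x : ℂ => ‖Smap m f x‖ ^ 2 + gradSq (Smap m f) x) ↔
      IntegrableOn (fun r =>
        (‖f r‖ ^ 2 + ‖f' r‖ ^ 2 + ((m : ℝ) + 1) ^ 2 * ‖f r‖ ^ 2 / r ^ 2) * r) (Ioi 0)) ∧
    (∫ x : ℂ, (‖Smap m f x‖ ^ 2 + gradSq (Smap m f) x))
      = 2 * π * ∫ r in Ioi (0:ℝ),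
          (‖f r‖ ^ 2 + ‖f' r‖ ^ 2 + ((m : ℝ) + 1) ^ 2 * ‖f r‖ ^ 2 / r ^ 2) * r := by
  set F : ℝ → ℝ := fun r =>
    (‖f r‖ ^ 2 + ‖f' r‖ ^ 2 + ((m : ℝ) + 1) ^ 2 * ‖f r‖ ^ 2 / r ^ 2) * r with hF
  have hfc : ContinuousOn f (Ioi 0) := fun t ht => ((hderiv t ht).continuousAt).continuousWithinAt
  have hfm : AEMeasurable f (volume.restrict (Ioi 0)) := hfc.aemeasurable measurableSet_Ioi
  have hf'm : AEMeasurable f' (volume.restrict (Ioi 0)) := f'_aemeasurable f f' hderiv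
  have hFm : AEStronglyMeasurable F (volume.restrict (Ioi 0)) := by
    apply AEMeasurable.aestronglyMeasurable
    apply AEMeasurable.mul _ aemeasurable_id'
    apply AEMeasurable.add
    apply AEMeasurable.add
    · exact hfm.norm.pow_const 2
    · exact hf'm.norm.pow_const 2
    · exact (aemeasurable_const.mul (hfm.norm.pow_const 2)).div
        ((aemeasurable_id' (μ := volume.restrict (Ioi 0))).pow_const 2)
  have hpt : ∀ p : ℝ × ℝ, p ∈ polarCoord.target →
      p.1 • ((fun x : ℂ => ‖Smap m f x‖ ^ 2 + gradSq (Smap m f) x) (Complex.polarCoord.symm p))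
        = F p.1 := by
    intro p hp
    have hp1 : 0 < p.1 := hp.1
    have hnp : ‖Complex.polarCoord.symm p‖ = p.1 := by
      rw [Complex.norm_polarCoord_symm, abs_of_pos hp1]
    have hne : Complex.polarCoord.symm p ≠ 0 := by
      intro h0
      rw [h0] at hnp
      simp at hnp
      exact hp1.ne' hnp.symm
    simp only [norm_Smap m f _ hne, gradSq_Smap m f f' hderiv _ hne, hnp, hF, smul_eq_mul]
    ring
  have := radial (fun x : ℂ => ‖Smap m f x‖ ^ 2 + gradSq (Smap m f) x) F hFm hpt
  exact this
end
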